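/- Let X and Y be nonnegative square real matrices with γ(X) ≤ c and γ(Y) ≤ c, and suppose that for positive integers n and k the Hausdorff distance between C(X,n) and C(Y,n) is at most ε. Then the Hausdorff distance between C(X,k) and C(Y,k) is at most ε + 4ck/n. -/

import Mathlib

open MeasureTheory Matrix
open scoped Pointwise

noncomputable section

/-- The Cantor set `{0,1}^ℕ`. -/
abbrev Cantor : Type := ℕ → Bool

/-- Cylinder set of a binary string given as a function `Fin n → Bool`. -/
def cylF {n : ℕ} (x : Fin n → Bool) : Set Cantor := {ω | ∀ i : Fin n, ω i = x i}

/-- Cylinder set of a binary string given as a list. -/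
def cyl (x : List Bool) : Set Cantor := {ω | ∀ i : Fin x.length, ω i = x.get i}

/-- `ν` is the fair coin-flipping (uniform product) measure on the Cantor set:
the unique Borel probability measure giving every cylinder of depth `n` mass `2⁻ⁿ`. -/
def IsCoinMeasure (ν : Measure Cantor) : Prop :=
  IsProbabilityMeasure ν ∧ ∀ (n : ℕ) (x : Fin n → Bool), ν (cylF x) = (1 / 2 : ENNReal) ^ n

/-- `K(k,n)`: nonnegative `k × I` matrices with all row sums `|I|/k` and all column sums `1`. -/
def Kset (k : ℕ) (I : Type) [Fintype I] : Set (Matrix (Fin k) I ℝ) :=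
  {M | (∀ i j, 0 ≤ M i j) ∧ (∀ i, ∑ j, M i j = (Fintype.card I : ℝ) / k) ∧
       (∀ j, ∑ i, M i j = 1)}

/-- The `k`-shape `C(S,k) = {M S Mᵀ : M ∈ K(k,n)}` of a square matrix `S`. -/
def matShape {I : Type} [Fintype I] (S : Matrix I I ℝ) (k : ℕ) :
    Set (Matrix (Fin k) (Fin k) ℝ) :=
  (fun M => M * S * Mᵀ) '' Kset k I

/-- `γ(S)`: the sum of all entries of `S`. -/
def gamma {I : Type} [Fintype I] (S : Matrix I I ℝ) : ℝ := ∑ i, ∑ j, S i j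

/-- The entrywise ℓ¹ norm of a matrix. -/
def l1 {k : ℕ} (A : Matrix (Fin k) (Fin k) ℝ) : ℝ := ∑ i, ∑ j, |A i j|

/-- The Hausdorff distance (w.r.t. the entrywise ℓ¹ norm) between `A` and `B` is at most `ε`. -/
def hdistLE {k : ℕ} (A B : Set (Matrix (Fin k) (Fin k) ℝ)) (ε : ℝ) : Prop :=
  (∀ X ∈ A, ∃ Y ∈ B, l1 (X - Y) ≤ ε) ∧ (∀ Y ∈ B, ∃ X ∈ A, l1 (X - Y) ≤ ε)

/-- Convergence of a sequence of shapes to `L` in the ℓ¹-Hausdorff metric. -/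
def ShapeTendsto {k : ℕ} (C : ℕ → Set (Matrix (Fin k) (Fin k) ℝ))
    (L : Set (Matrix (Fin k) (Fin k) ℝ)) : Prop :=
  ∀ ε : ℝ, 0 < ε → ∃ N : ℕ, ∀ n ≥ N, hdistLE (C n) L ε

/-- `C₀(μ,k)`: matrices `M` with `M i j = ∫ fᵢ(x) fⱼ(y) dμ` for a measurable partition of unity
`f₁,…,f_k` with `∫ fᵢ dν = 1/k`. -/
def mShape0 {α : Type} [MeasurableSpace α] (ν : Measure α) (μ : Measure (α × α)) (k : ℕ) :
    Set (Matrix (Fin k) (Fin k) ℝ) :=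
  {M | ∃ f : Fin k → α → ℝ,
    (∀ i, Measurable (f i)) ∧ (∀ i x, 0 ≤ f i x) ∧ (∀ x, ∑ i, f i x = 1) ∧
    (∀ i, ∫ x, f i x ∂ν = 1 / k) ∧
    (∀ i j, M i j = ∫ p, f i p.1 * f j p.2 ∂μ)}

/-- `C(μ,k)`: the topological closure of `C₀(μ,k)`. -/
def mShape {α : Type} [MeasurableSpace α] (ν : Measure α) (μ : Measure (α × α)) (k : ℕ) :
    Set (Matrix (Fin k) (Fin k) ℝ) := closure (mShape0 ν μ k)

/-- `C_c(μ,k)`: as `C₀(μ,k)` but with continuous witness functions. -/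
def mShapeC (ν : Measure Cantor) (μ : Measure (Cantor × Cantor)) (k : ℕ) :
    Set (Matrix (Fin k) (Fin k) ℝ) :=
  {M | ∃ f : Fin k → Cantor → ℝ,
    (∀ i, Continuous (f i)) ∧ (∀ i x, 0 ≤ f i x) ∧ (∀ x, ∑ i, f i x = 1) ∧
    (∀ i, ∫ x, f i x ∂ν = 1 / k) ∧
    (∀ i j, M i j = ∫ p, f i p.1 * f j p.2 ∂μ)}

open Classical in
/-- The real adjacency matrix of a simple graph. -/
def adjMat {V : Type} [Fintype V] (G : SimpleGraph V) : Matrix V V ℝ :=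
  fun a b => if G.Adj a b then 1 else 0

/-- `C₀(G,k) = ‖A_G‖₁⁻¹ ⬝ C(A_G,k)` for a finite graph `G`. -/
def graphShape {V : Type} [Fintype V] (G : SimpleGraph V) (k : ℕ) :
    Set (Matrix (Fin k) (Fin k) ℝ) :=
  (gamma (adjMat G))⁻¹ • matShape (adjMat G) k

/-- `K̂(k,m)`: characteristic matrices of balanced partitions of `{1,…,m}` into `k` classes. -/
def Khat (k m : ℕ) : Set (Matrix (Fin k) (Fin m) ℝ) :=
  {M | (∀ i j, M i j = 0 ∨ M i j = 1) ∧ (∀ j, ∑ i, M i j = 1) ∧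
       (∀ i, ∑ j, M i j = (⌈(m : ℝ) / k⌉₊ : ℝ) ∨ ∑ j, M i j = (⌊(m : ℝ) / k⌋₊ : ℝ))}

/-- `C̃₀(μ,α)`: matrices coming from a measurable partition of unity with `∫ fᵢ dν = αᵢ`. -/
def tShape0 {α : Type} [MeasurableSpace α] (ν : Measure α) (μ : Measure (α × α)) {m : ℕ}
    (a : Fin m → ℝ) : Set (Matrix (Fin m) (Fin m) ℝ) :=
  {M | ∃ f : Fin m → α → ℝ,
    (∀ i, Measurable (f i)) ∧ (∀ i x, 0 ≤ f i x) ∧ (∀ x, ∑ i, f i x = 1) ∧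
    (∀ i, ∫ x, f i x ∂ν = a i) ∧
    (∀ i j, M i j = ∫ p, f i p.1 * f j p.2 ∂μ)}

/-- `C̃(μ,α)`: the topological closure of `C̃₀(μ,α)`. -/
def tShape {α : Type} [MeasurableSpace α] (ν : Measure α) (μ : Measure (α × α)) {m : ℕ}
    (a : Fin m → ℝ) : Set (Matrix (Fin m) (Fin m) ℝ) := closure (tShape0 ν μ a)

/-- The Hausdorff distance w.r.t. the entrywise ℓ∞ norm between `A` and `B` is at most `ε`. -/
def hdistInfLE {m : ℕ} (A B : Set (Matrix (Fin m) (Fin m) ℝ)) (ε : ℝ) : Prop :=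
  (∀ X ∈ A, ∃ Y ∈ B, ∀ i j, |X i j - Y i j| ≤ ε) ∧
  (∀ Y ∈ B, ∃ X ∈ A, ∀ i j, |X i j - Y i j| ≤ ε)


/- ### Auxiliary lemmas for Statement 15 ### -/

lemma entry_conj {k : ℕ} {I : Type} [Fintype I] (M M' : Matrix (Fin k) I ℝ)
    (X : Matrix I I ℝ) (i j : Fin k) :
    (M * X * M'ᵀ) i j = ∑ l, ∑ m, M i l * X l m * M' j m := by
  simp only [Matrix.mul_apply, Matrix.transpose_apply, Finset.sum_mul]
  rw [Finset.sum_comm]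

lemma conj_rearrange {k : ℕ} {I : Type} [Fintype I] (M M' : Matrix (Fin k) I ℝ)
    (g : I → I → ℝ) :
    ∑ i : Fin k, ∑ j : Fin k, ∑ l : I, ∑ m : I, M i l * g l m * M' j m
      = ∑ l : I, ∑ m : I, (∑ i : Fin k, M i l) * g l m * (∑ j : Fin k, M' j m) := by
  have step1 : ∀ i : Fin k, ∑ j : Fin k, ∑ l : I, ∑ m : I, M i l * g l m * M' j m
      = ∑ l : I, ∑ m : I, M i l * g l m * (∑ j : Fin k, M' j m) := by
    intro i
    rw [Finset.sum_comm]
    refine Finset.sum_congr rfl fun l _ => ?_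
    rw [Finset.sum_comm]
    refine Finset.sum_congr rfl fun m _ => ?_
    rw [← Finset.mul_sum]
  rw [Finset.sum_congr rfl fun i _ => step1 i]
  rw [Finset.sum_comm]
  refine Finset.sum_congr rfl fun l _ => ?_
  rw [Finset.sum_comm]
  refine Finset.sum_congr rfl fun m _ => ?_
  rw [← Finset.sum_mul, ← Finset.sum_mul]

lemma quad_bound {k : ℕ} {I : Type} [Fintype I] (M M' : Matrix (Fin k) I ℝ)
    (g : I → I → ℝ) :
    ∑ i : Fin k, ∑ j : Fin k, |∑ l : I, ∑ m : I, M i l * g l m * M' j m|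
      ≤ ∑ l : I, ∑ m : I, (∑ i : Fin k, |M i l|) * |g l m| * (∑ j : Fin k, |M' j m|) := by
  have := conj_rearrange (fun i l => |M i l|) (fun i l => |M' i l|) (fun l m => |g l m|)
  rw [← this]
  refine Finset.sum_le_sum fun i _ => Finset.sum_le_sum fun j _ => ?_
  refine le_trans (Finset.abs_sum_le_sum_abs _ _) ?_
  refine Finset.sum_le_sum fun l _ => ?_
  refine le_trans (Finset.abs_sum_le_sum_abs _ _) ?_
  refine le_of_eq (Finset.sum_congr rfl fun m _ => by rw [abs_mul, abs_mul])

lemma triple_bound {k n : ℕ} (a : Matrix (Fin k) (Fin n) ℝ) (b : Matrix (Fin n) (Fin k) ℝ) :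
    ∑ i : Fin k, ∑ j : Fin k, |∑ l : Fin n, a i l * b l j|
      ≤ ∑ l : Fin n, (∑ i : Fin k, |a i l|) * (∑ j : Fin k, |b l j|) := by
  calc ∑ i : Fin k, ∑ j : Fin k, |∑ l : Fin n, a i l * b l j|
      ≤ ∑ i : Fin k, ∑ j : Fin k, ∑ l : Fin n, |a i l| * |b l j| := by
        refine Finset.sum_le_sum fun i _ => Finset.sum_le_sum fun j _ => ?_
        refine le_trans (Finset.abs_sum_le_sum_abs _ _) ?_
        exact le_of_eq (Finset.sum_congr rfl fun l _ => abs_mul _ _)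
    _ = ∑ l : Fin n, (∑ i : Fin k, |a i l|) * (∑ j : Fin k, |b l j|) := by
        have h1 : ∀ i : Fin k, ∑ j : Fin k, ∑ l : Fin n, |a i l| * |b l j|
            = ∑ l : Fin n, |a i l| * ∑ j : Fin k, |b l j| := by
          intro i
          rw [Finset.sum_comm]
          exact Finset.sum_congr rfl fun l _ => (Finset.mul_sum _ _ _).symm
        rw [Finset.sum_congr rfl fun i _ => h1 i, Finset.sum_comm]
        exact Finset.sum_congr rfl fun l _ => (Finset.sum_mul _ _ _).symm

lemma Kset_mul {k n : ℕ} {I : Type} [Fintype I] (hk : 0 < k) (hn : 0 < n)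
    {R : Matrix (Fin k) (Fin n) ℝ} (hR : R ∈ Kset k (Fin n))
    {N : Matrix (Fin n) I ℝ} (hN : N ∈ Kset n I) : R * N ∈ Kset k I := by
  obtain ⟨hR0, hRr, hRc⟩ := hR
  obtain ⟨hN0, hNr, hNc⟩ := hN
  refine ⟨fun i j => ?_, fun i => ?_, fun j => ?_⟩
  · rw [Matrix.mul_apply]
    exact Finset.sum_nonneg fun m _ => mul_nonneg (hR0 i m) (hN0 m j)
  · have : ∑ j, (R * N) i j = ∑ m, R i m * ((Fintype.card I : ℝ) / n) := by
      simp only [Matrix.mul_apply]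
      rw [Finset.sum_comm]
      exact Finset.sum_congr rfl fun m _ => by rw [← Finset.mul_sum, hNr m]
    rw [this, ← Finset.sum_mul, hRr i]
    have hk' : (k : ℝ) ≠ 0 := Nat.cast_ne_zero.mpr hk.ne'
    have hn' : (n : ℝ) ≠ 0 := Nat.cast_ne_zero.mpr hn.ne'
    simp only [Fintype.card_fin]
    field_simp
  · have : ∑ i, (R * N) i j = ∑ m, (∑ i, R i m) * N m j := by
      simp only [Matrix.mul_apply]
      rw [Finset.sum_comm]
      exact Finset.sum_congr rfl fun m _ => (Finset.sum_mul _ _ _).symm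
    rw [this]
    simp only [hRc]
    simp only [one_mul, hNc j]

lemma gamma_conj {k : ℕ} {I : Type} [Fintype I] {M : Matrix (Fin k) I ℝ}
    (hM : M ∈ Kset k I) (X : Matrix I I ℝ) : gamma (M * X * Mᵀ) = gamma X := by
  unfold gamma
  rw [Finset.sum_congr rfl fun i (_ : i ∈ Finset.univ) =>
    Finset.sum_congr rfl fun j _ => entry_conj M M X i j]
  refine (conj_rearrange M M X).trans ?_
  exact Finset.sum_congr rfl fun l _ => Finset.sum_congr rfl fun m _ => by
    rw [hM.2.2 l, hM.2.2 m, one_mul, mul_one]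

lemma gamma_nonneg {I : Type} [Fintype I] {X : Matrix I I ℝ} (hX : ∀ i j, 0 ≤ X i j) :
    0 ≤ gamma X :=
  Finset.sum_nonneg fun i _ => Finset.sum_nonneg fun j _ => hX i j

lemma conj_nonneg {k : ℕ} {I : Type} [Fintype I] {M : Matrix (Fin k) I ℝ}
    (hM : M ∈ Kset k I) {X : Matrix I I ℝ} (hX : ∀ i j, 0 ≤ X i j) (i j : Fin k) :
    0 ≤ (M * X * Mᵀ) i j := by
  rw [entry_conj]
  exact Finset.sum_nonneg fun l _ => Finset.sum_nonneg fun m _ =>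
    mul_nonneg (mul_nonneg (hM.1 i l) (hX l m)) (hM.1 j m)

lemma l1_nonneg {k : ℕ} (A : Matrix (Fin k) (Fin k) ℝ) : 0 ≤ l1 A :=
  Finset.sum_nonneg fun i _ => Finset.sum_nonneg fun j _ => abs_nonneg _

lemma l1_sub_comm {k : ℕ} (A B : Matrix (Fin k) (Fin k) ℝ) : l1 (A - B) = l1 (B - A) := by
  unfold l1
  refine Finset.sum_congr rfl fun i _ => Finset.sum_congr rfl fun j _ => ?_
  simp only [Matrix.sub_apply]
  exact abs_sub_comm _ _

lemma l1_triangle {k : ℕ} (A B C : Matrix (Fin k) (Fin k) ℝ) :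
    l1 (A - C) ≤ l1 (A - B) + l1 (B - C) := by
  unfold l1
  rw [← Finset.sum_add_distrib]
  refine Finset.sum_le_sum fun i _ => ?_
  rw [← Finset.sum_add_distrib]
  refine Finset.sum_le_sum fun j _ => ?_
  simp only [Matrix.sub_apply]
  exact abs_sub_le _ _ _

lemma l1_sub_le_gamma {k : ℕ} {A B : Matrix (Fin k) (Fin k) ℝ}
    (hA : ∀ i j, 0 ≤ A i j) (hB : ∀ i j, 0 ≤ B i j) :
    l1 (A - B) ≤ gamma A + gamma B := by
  unfold l1 gamma
  rw [← Finset.sum_add_distrib]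
  refine Finset.sum_le_sum fun i _ => ?_
  rw [← Finset.sum_add_distrib]
  refine Finset.sum_le_sum fun j _ => ?_
  simp only [Matrix.sub_apply]
  rw [abs_sub_le_iff]
  constructor <;> [linarith [hA i j, hB i j]; linarith [hA i j, hB i j]]

lemma unif_mem {k : ℕ} (hk : 0 < k) (I : Type) [Fintype I] :
    (fun (_ : Fin k) (_ : I) => (1 : ℝ)/k) ∈ Kset k I := by
  have hk' : (k : ℝ) ≠ 0 := Nat.cast_ne_zero.mpr hk.ne'
  refine ⟨fun i j => by positivity, fun i => ?_, fun j => ?_⟩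
  · simp [Finset.sum_const]
    ring
  · simp [Finset.sum_const]
    field_simp

lemma matShape_nonempty {k : ℕ} (hk : 0 < k) {I : Type} [Fintype I]
    (X : Matrix I I ℝ) : (matShape X k).Nonempty :=
  ⟨_, ⟨_, unif_mem hk I, rfl⟩⟩

lemma l1_add_le {k : ℕ} (A B : Matrix (Fin k) (Fin k) ℝ) : l1 (A + B) ≤ l1 A + l1 B := by
  unfold l1
  rw [← Finset.sum_add_distrib]
  refine Finset.sum_le_sum fun i _ => ?_
  rw [← Finset.sum_add_distrib]
  refine Finset.sum_le_sum fun j _ => ?_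
  simp only [Matrix.add_apply]
  exact abs_add_le _ _

lemma l1_neg {k : ℕ} (A : Matrix (Fin k) (Fin k) ℝ) : l1 (-A) = l1 A := by
  unfold l1
  refine Finset.sum_congr rfl fun i _ => Finset.sum_congr rfl fun j _ => ?_
  simp [abs_neg]

/-- `l1(R D Rᵀ) ≤ ∑∑|D|` when `R` has nonneg entries and column sums 1. -/
lemma l1_conj_le {k n : ℕ} {R : Matrix (Fin k) (Fin n) ℝ} (hR : R ∈ Kset k (Fin n))
    (D : Matrix (Fin n) (Fin n) ℝ) : l1 (R * D * Rᵀ) ≤ ∑ l, ∑ m, |D l m| := by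
  unfold l1
  calc ∑ i, ∑ j, |(R * D * Rᵀ) i j|
      = ∑ i : Fin k, ∑ j : Fin k, |∑ l, ∑ m, R i l * D l m * R j m| := by
        refine Finset.sum_congr rfl fun i _ => Finset.sum_congr rfl fun j _ => ?_
        rw [entry_conj]
    _ ≤ ∑ l, ∑ m, (∑ i, |R i l|) * |D l m| * (∑ j, |R j m|) := quad_bound R R D
    _ = ∑ l, ∑ m, |D l m| := by
        refine Finset.sum_congr rfl fun l _ => Finset.sum_congr rfl fun m _ => ?_
        have e : ∀ m : Fin n, (∑ i, |R i m|) = 1 := by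
          intro m
          rw [← hR.2.2 m]
          exact Finset.sum_congr rfl fun i _ => abs_of_nonneg (hR.1 i m)
        rw [e l, e m, one_mul, mul_one]

/-- Perturbation bound: if each column of `S - 1` has absolute sum at most `β`,
then conjugating a nonnegative `P` by `S` moves it by at most `(2β+β²)γ(P)`. -/
lemma pert {k : ℕ} (P S : Matrix (Fin k) (Fin k) ℝ) (hP0 : ∀ i j, 0 ≤ P i j)
    (β : ℝ) (hβ0 : 0 ≤ β)
    (hE : ∀ l, ∑ i, |S i l - (if i = l then 1 else 0)| ≤ β) :
    l1 (P - S * P * Sᵀ) ≤ 2 * β * gamma P + β * β * gamma P := by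
  set E : Matrix (Fin k) (Fin k) ℝ := S - 1 with hEdef
  have hEabs : ∀ l, ∑ i, |E i l| ≤ β := by
    intro l
    have := hE l
    simpa [hEdef, Matrix.sub_apply, Matrix.one_apply] using this
  have hS : S = E + 1 := by rw [hEdef]; abel
  have hid : P - S * P * Sᵀ = -(E * P + P * Eᵀ + E * P * Eᵀ) := by
    rw [hS, Matrix.transpose_add, Matrix.transpose_one]
    noncomm_ring
  rw [hid, l1_neg]
  have hγ : gamma P = ∑ l, ∑ j, P l j := rfl
  have hγ' : gamma P = ∑ m, ∑ i, P i m := Finset.sum_comm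
  have h1 : l1 (E * P) ≤ β * gamma P := by
    unfold l1
    simp only [Matrix.mul_apply]
    refine le_trans (triple_bound E P) ?_
    rw [hγ, Finset.mul_sum]
    refine Finset.sum_le_sum fun l _ => ?_
    have e1 : (∑ j, |P l j|) = ∑ j, P l j :=
      Finset.sum_congr rfl fun j _ => abs_of_nonneg (hP0 l j)
    rw [e1]
    exact mul_le_mul_of_nonneg_right (hEabs l)
      (Finset.sum_nonneg fun j _ => hP0 l j)
  have h2 : l1 (P * Eᵀ) ≤ β * gamma P := by
    unfold l1
    simp only [Matrix.mul_apply]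
    refine le_trans (triple_bound P Eᵀ) ?_
    rw [hγ', Finset.mul_sum]
    refine Finset.sum_le_sum fun m _ => ?_
    have e1 : (∑ i, |P i m|) = ∑ i, P i m :=
      Finset.sum_congr rfl fun i _ => abs_of_nonneg (hP0 i m)
    have e2 : (∑ j, |Eᵀ m j|) = ∑ j, |E j m| := rfl
    rw [e1, e2, mul_comm ((∑ i, P i m)) _]
    exact mul_le_mul_of_nonneg_right (hEabs m)
      (Finset.sum_nonneg fun i _ => hP0 i m)
  have h3 : l1 (E * P * Eᵀ) ≤ β * β * gamma P := by
    unfold l1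
    calc ∑ i, ∑ j, |(E * P * Eᵀ) i j|
        = ∑ i : Fin k, ∑ j : Fin k, |∑ l, ∑ m, E i l * P l m * E j m| := by
          refine Finset.sum_congr rfl fun i _ => Finset.sum_congr rfl fun j _ => ?_
          rw [entry_conj]
      _ ≤ ∑ l, ∑ m, (∑ i, |E i l|) * |P l m| * (∑ j, |E j m|) := quad_bound E E P
      _ ≤ ∑ l, ∑ m, β * P l m * β := by
          refine Finset.sum_le_sum fun l _ => Finset.sum_le_sum fun m _ => ?_
          rw [abs_of_nonneg (hP0 l m)]
          have hEl := hEabs l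
          have hEm := hEabs m
          have h0m : (0:ℝ) ≤ ∑ j, |E j m| := Finset.sum_nonneg fun j _ => abs_nonneg _
          have step : (∑ i, |E i l|) * P l m ≤ β * P l m :=
            mul_le_mul_of_nonneg_right hEl (hP0 l m)
          exact mul_le_mul step hEm h0m (mul_nonneg hβ0 (hP0 l m))
      _ = β * β * gamma P := by
          rw [hγ]
          rw [Finset.mul_sum]
          refine Finset.sum_congr rfl fun l _ => ?_
          rw [Finset.mul_sum]
          refine Finset.sum_congr rfl fun m _ => ?_
          ring
  calc l1 (E * P + P * Eᵀ + E * P * Eᵀ)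
      ≤ l1 (E * P + P * Eᵀ) + l1 (E * P * Eᵀ) := l1_add_le _ _
    _ ≤ l1 (E * P) + l1 (P * Eᵀ) + l1 (E * P * Eᵀ) := by
        linarith [l1_add_le (E * P) (P * Eᵀ)]
    _ ≤ 2 * β * gamma P + β * β * gamma P := by linarith


lemma clamp_diff {A B s t : ℝ} (hAB : A ≤ B) (hst : s ≤ t) :
    max 0 (min B t - max A s) = max A (min B t) - max A (min B s) := by
  simp only [min_def, max_def]
  split_ifs <;> linarith

/-- overlap of `[i·L,(i+1)·L)` with `[m,m+1)`. -/
def ov (L : ℝ) (i m : ℕ) : ℝ := max 0 (min (((i : ℝ)+1)*L) ((m : ℝ)+1) - max ((i : ℝ)*L) (m : ℝ))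

lemma ov_nonneg (L : ℝ) (i m : ℕ) : 0 ≤ ov L i m := le_max_left _ _

lemma ov_le_one (L : ℝ) (i m : ℕ) : ov L i m ≤ 1 := by
  unfold ov
  have h1 : min (((i : ℝ)+1)*L) ((m : ℝ)+1) ≤ (m : ℝ)+1 := min_le_right _ _
  have h2 : (m : ℝ) ≤ max ((i : ℝ)*L) (m : ℝ) := le_max_right _ _
  have : min (((i : ℝ)+1)*L) ((m : ℝ)+1) - max ((i : ℝ)*L) (m : ℝ) ≤ 1 := by linarith
  exact max_le (by norm_num) this

lemma sum_ov_row (L : ℝ) (hL : 0 ≤ L) (n i : ℕ) (hB : ((i : ℝ)+1)*L ≤ n) :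
    ∑ m ∈ Finset.range n, ov L i m = L := by
  have hA0 : 0 ≤ (i : ℝ)*L := by positivity
  have hAB : (i : ℝ)*L ≤ ((i : ℝ)+1)*L := by nlinarith
  have key : ∀ m : ℕ, ov L i m =
      (fun x : ℕ => max ((i : ℝ)*L) (min (((i : ℝ)+1)*L) (x : ℝ))) (m+1)
      - (fun x : ℕ => max ((i : ℝ)*L) (min (((i : ℝ)+1)*L) (x : ℝ))) m := by
    intro m
    simp only [ov]
    push_cast
    exact clamp_diff hAB (by linarith [Nat.cast_nonneg (α := ℝ) m] : (m : ℝ) ≤ (m : ℝ)+1)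
  have e1 : ∑ m ∈ Finset.range n, ov L i m
      = ∑ m ∈ Finset.range n, ((fun x : ℕ => max ((i : ℝ)*L) (min (((i : ℝ)+1)*L) (x : ℝ))) (m+1)
        - (fun x : ℕ => max ((i : ℝ)*L) (min (((i : ℝ)+1)*L) (x : ℝ))) m) :=
    Finset.sum_congr rfl (fun m _ => key m)
  rw [e1, Finset.sum_range_sub (fun x : ℕ => max ((i : ℝ)*L) (min (((i : ℝ)+1)*L) (x : ℝ))) n]
  simp only [Nat.cast_zero]
  rw [min_eq_left hB, min_eq_right (le_trans hA0 hAB : (0:ℝ) ≤ ((i : ℝ)+1)*L),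
    max_eq_right hAB, max_eq_left hA0]
  ring

lemma sum_ov_col (L : ℝ) (hL : 0 ≤ L) (k m : ℕ) (hm : (m : ℝ)+1 ≤ (k : ℝ)*L) :
    ∑ i ∈ Finset.range k, ov L i m = 1 := by
  have key : ∀ i : ℕ, ov L i m =
      (fun x : ℕ => max (m : ℝ) (min ((m : ℝ)+1) ((x : ℝ)*L))) (i+1)
      - (fun x : ℕ => max (m : ℝ) (min ((m : ℝ)+1) ((x : ℝ)*L))) i := by
    intro i
    simp only [ov]
    push_cast
    rw [min_comm, max_comm ((i : ℝ)*L)]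
    exact clamp_diff (by linarith : (m : ℝ) ≤ (m : ℝ)+1) (by nlinarith : (i : ℝ)*L ≤ ((i : ℝ)+1)*L)
  have e1 : ∑ i ∈ Finset.range k, ov L i m
      = ∑ i ∈ Finset.range k, ((fun x : ℕ => max (m : ℝ) (min ((m : ℝ)+1) ((x : ℝ)*L))) (i+1)
        - (fun x : ℕ => max (m : ℝ) (min ((m : ℝ)+1) ((x : ℝ)*L))) i) :=
    Finset.sum_congr rfl (fun i _ => key i)
  rw [e1, Finset.sum_range_sub (fun x : ℕ => max (m : ℝ) (min ((m : ℝ)+1) ((x : ℝ)*L))) k]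
  simp only [Nat.cast_zero, zero_mul]
  have hm0 : (0 : ℝ) ≤ (m : ℝ) := Nat.cast_nonneg m
  rw [min_eq_left hm, min_eq_right (by linarith : (0:ℝ) ≤ (m : ℝ)+1),
    max_eq_right (by linarith : (m : ℝ) ≤ (m : ℝ)+1), max_eq_left hm0]
  ring

lemma sum_ov_mul_one_sub (L : ℝ) (hL : 0 ≤ L) (i n : ℕ) :
    ∑ m ∈ Finset.range n, ov L i m * (1 - ov L i m) ≤ 1/2 := by
  set A : ℝ := (i : ℝ)*L with hA
  set B : ℝ := ((i : ℝ)+1)*L with hB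
  have hA0 : 0 ≤ A := by positivity
  have hAB : A ≤ B := by nlinarith
  have hzero : ∀ m : ℕ, m ≠ ⌊A⌋₊ → m ≠ ⌊B⌋₊ → ov L i m * (1 - ov L i m) = 0 := by
    intro m h1 h2
    rcases lt_trichotomy m ⌊A⌋₊ with hlt | heq | hgt
    · -- m+1 ≤ ⌊A⌋₊ ≤ A : ov = 0
      have : (m : ℝ) + 1 ≤ A := by
        have : (m+1 : ℕ) ≤ ⌊A⌋₊ := hlt
        have := Nat.floor_le hA0
        have hc : ((m+1 : ℕ) : ℝ) ≤ (⌊A⌋₊ : ℝ) := Nat.cast_le.mpr hlt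
        push_cast at hc; linarith
      have : ov L i m = 0 := by
        apply max_eq_left
        have : min B ((m : ℝ)+1) ≤ (m : ℝ)+1 := min_le_right _ _
        have : A ≤ max A (m : ℝ) := le_max_left _ _
        simp only [ov, ← hA, ← hB]
        have h3 : min B ((m : ℝ)+1) - max A (m : ℝ) ≤ 0 := by
          have := min_le_right B ((m : ℝ)+1)
          have := le_max_left A (m : ℝ)
          linarith
        linarith [h3]
      rw [this]; ring
    · omega
    · rcases lt_trichotomy m ⌊B⌋₊ with hlt2 | heq2 | hgt2
      · -- ⌊A⌋₊ < m < ⌊B⌋₊ : ov = 1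
        have hAm : A ≤ (m : ℝ) := by
          have h3 : (⌊A⌋₊ + 1 : ℕ) ≤ m := hgt
          have h4 : A < (⌊A⌋₊ : ℝ) + 1 := Nat.lt_floor_add_one A
          have hc : ((⌊A⌋₊ + 1 : ℕ) : ℝ) ≤ (m : ℝ) := Nat.cast_le.mpr h3
          push_cast at hc; linarith
        have hmB : (m : ℝ)+1 ≤ B := by
          have h3 : (m+1 : ℕ) ≤ ⌊B⌋₊ := hlt2
          have h4 : (⌊B⌋₊ : ℝ) ≤ B := Nat.floor_le (le_trans hA0 hAB)
          have hc : ((m+1 : ℕ) : ℝ) ≤ (⌊B⌋₊ : ℝ) := Nat.cast_le.mpr h3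
          push_cast at hc; linarith
        have : ov L i m = 1 := by
          simp only [ov, ← hA, ← hB]
          rw [min_eq_right hmB, max_eq_right hAm]
          rw [max_eq_right (by linarith : (0:ℝ) ≤ (m : ℝ)+1 - (m : ℝ))]
          ring
        rw [this]; ring
      · omega
      · -- m ≥ ⌊B⌋₊ + 1 > B : ov = 0
        have hBm : B ≤ (m : ℝ) := by
          have h3 : (⌊B⌋₊ + 1 : ℕ) ≤ m := hgt2
          have h4 : B < (⌊B⌋₊ : ℝ) + 1 := Nat.lt_floor_add_one B
          have hc : ((⌊B⌋₊ + 1 : ℕ) : ℝ) ≤ (m : ℝ) := Nat.cast_le.mpr h3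
          push_cast at hc; linarith
        have : ov L i m = 0 := by
          apply max_eq_left
          simp only [ov, ← hA, ← hB]
          have := min_le_left B ((m : ℝ)+1)
          have := le_max_right A (m : ℝ)
          linarith
        rw [this]; ring
  have hbd : ∀ m ∈ Finset.range n, ov L i m * (1 - ov L i m)
      ≤ (if m = ⌊A⌋₊ then (1/4 : ℝ) else 0) + (if m = ⌊B⌋₊ then (1/4 : ℝ) else 0) := by
    intro m _
    by_cases h1 : m = ⌊A⌋₊
    · subst h1
      have h0 : (0:ℝ) ≤ if ⌊A⌋₊ = ⌊B⌋₊ then (1/4:ℝ) else 0 := by positivity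
      rw [if_pos rfl]
      nlinarith [sq_nonneg (ov L i ⌊A⌋₊ - 1/2)]
    · rw [if_neg h1]
      by_cases h2 : m = ⌊B⌋₊
      · rw [if_pos h2]
        nlinarith [sq_nonneg (ov L i m - 1/2)]
      · rw [if_neg h2, hzero m h1 h2]; norm_num
  calc ∑ m ∈ Finset.range n, ov L i m * (1 - ov L i m)
      ≤ ∑ m ∈ Finset.range n, ((if m = ⌊A⌋₊ then (1/4 : ℝ) else 0) + (if m = ⌊B⌋₊ then (1/4 : ℝ) else 0)) :=
        Finset.sum_le_sum hbd
    _ = (∑ m ∈ Finset.range n, if m = ⌊A⌋₊ then (1/4 : ℝ) else 0)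
        + ∑ m ∈ Finset.range n, if m = ⌊B⌋₊ then (1/4 : ℝ) else 0 := Finset.sum_add_distrib
    _ ≤ 1/4 + 1/4 := by
        gcongr <;>
        · rw [Finset.sum_ite_eq' (Finset.range n)]
          split_ifs <;> norm_num
    _ = 1/2 := by norm_num

noncomputable def Rmat (k n : ℕ) : Matrix (Fin k) (Fin n) ℝ := fun i m => ov ((n:ℝ)/k) i m
noncomputable def Qmat (k n : ℕ) : Matrix (Fin n) (Fin k) ℝ := fun m i => ((k:ℝ)/n) * ov ((n:ℝ)/k) i m

section RQ
variable {k n : ℕ}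

lemma kL (hk : 0 < k) : (k : ℝ) * ((n:ℝ)/k) = n := by
  field_simp

lemma Rrow (hk : 0 < k) (i : Fin k) : ∑ m : Fin n, Rmat k n i m = (n:ℝ)/k := by
  have h := Fin.sum_univ_eq_sum_range (fun m => ov ((n:ℝ)/k) i m) n
  simp only [Rmat]
  rw [h]
  apply sum_ov_row _ (by positivity)
  have hik : (i : ℝ) + 1 ≤ k := by
    have := i.isLt
    exact_mod_cast Nat.succ_le_of_lt this
  calc ((i:ℝ)+1) * ((n:ℝ)/k) ≤ (k:ℝ) * ((n:ℝ)/k) :=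
        mul_le_mul_of_nonneg_right hik (by positivity)
    _ = n := kL hk

lemma Rcol (hk : 0 < k) (hn : 0 < n) (m : Fin n) : ∑ i : Fin k, Rmat k n i m = 1 := by
  have h := Fin.sum_univ_eq_sum_range (fun i => ov ((n:ℝ)/k) i m) k
  simp only [Rmat]
  rw [h]
  apply sum_ov_col _ (by positivity)
  rw [kL hk]
  exact_mod_cast Nat.succ_le_of_lt m.isLt

lemma Rmat_mem (hk : 0 < k) (hn : 0 < n) : Rmat k n ∈ Kset k (Fin n) := by
  refine ⟨fun i m => ov_nonneg _ _ _, fun i => ?_, fun m => Rcol hk hn m⟩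
  rw [Rrow hk i]
  simp

lemma Qmat_mem (hk : 0 < k) (hn : 0 < n) : Qmat k n ∈ Kset n (Fin k) := by
  have hn' : (n : ℝ) ≠ 0 := Nat.cast_ne_zero.mpr hn.ne'
  have hk' : (k : ℝ) ≠ 0 := Nat.cast_ne_zero.mpr hk.ne'
  refine ⟨fun m i => mul_nonneg (by positivity) (ov_nonneg _ _ _), fun m => ?_, fun i => ?_⟩
  · rw [show ∑ i : Fin k, Qmat k n m i = ((k:ℝ)/n) * ∑ i : Fin k, Rmat k n i m by
      rw [Finset.mul_sum]; rfl]
    rw [Rcol hk hn m]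
    simp
  · rw [show ∑ m : Fin n, Qmat k n m i = ((k:ℝ)/n) * ∑ m : Fin n, Rmat k n i m by
      rw [Finset.mul_sum]; rfl]
    rw [Rrow hk i]
    field_simp

lemma S_diag (hk : 0 < k) (hn : 0 < n) (l : Fin k) :
    1 - (k:ℝ)/(2*n) ≤ (Rmat k n * Qmat k n) l l := by
  have hn' : (n : ℝ) ≠ 0 := Nat.cast_ne_zero.mpr hn.ne'
  have hk' : (k : ℝ) ≠ 0 := Nat.cast_ne_zero.mpr hk.ne'
  set L : ℝ := (n:ℝ)/k with hLdef
  have hL0 : 0 ≤ L := by positivity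
  have hsq : L - 1/2 ≤ ∑ m ∈ Finset.range n, ov L l m * ov L l m := by
    have h1 : ∑ m ∈ Finset.range n, ov L l m * (1 - ov L l m) ≤ 1/2 :=
      sum_ov_mul_one_sub L hL0 l n
    have h2 : ∑ m ∈ Finset.range n, ov L l m = L := by
      have := Rrow (n := n) hk l
      simp only [Rmat] at this
      rw [← Fin.sum_univ_eq_sum_range (fun m => ov L l m) n]
      exact this
    have h3 : ∑ m ∈ Finset.range n, ov L l m * (1 - ov L l m)
        = (∑ m ∈ Finset.range n, ov L l m) - ∑ m ∈ Finset.range n, ov L l m * ov L l m := by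
      rw [← Finset.sum_sub_distrib]
      exact Finset.sum_congr rfl fun m _ => by ring
    rw [h3, h2] at h1
    linarith
  have hS : (Rmat k n * Qmat k n) l l = ((k:ℝ)/n) * ∑ m ∈ Finset.range n, ov L l m * ov L l m := by
    rw [Matrix.mul_apply]
    rw [← Fin.sum_univ_eq_sum_range (fun m => ov L l m * ov L l m) n, Finset.mul_sum]
    refine Finset.sum_congr rfl fun m _ => ?_
    simp only [Rmat, Qmat]
    ring
  rw [hS]
  have hkn0 : 0 < (k:ℝ)/n := by positivity
  calc 1 - (k:ℝ)/(2*n) = ((k:ℝ)/n) * (L - 1/2) := by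
        rw [hLdef]; field_simp
    _ ≤ ((k:ℝ)/n) * ∑ m ∈ Finset.range n, ov L l m * ov L l m :=
        mul_le_mul_of_nonneg_left hsq hkn0.le

lemma S_col (hk : 0 < k) (hn : 0 < n) (l : Fin k) :
    ∑ i, |(Rmat k n * Qmat k n) i l - (if i = l then 1 else 0)| ≤ (k:ℝ)/n := by
  set S := Rmat k n * Qmat k n with hSdef
  have hmem : S ∈ Kset k (Fin k) := Kset_mul hk hn (Rmat_mem hk hn) (Qmat_mem hk hn)
  have hcol : ∑ i, S i l = 1 := hmem.2.2 l
  have hll : S l l ≤ 1 := by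
    rw [← hcol]
    exact Finset.single_le_sum (f := fun i => S i l) (fun i _ => hmem.1 i l)
      (Finset.mem_univ l)
  have key : ∀ i, |S i l - (if i = l then 1 else 0)|
      = S i l + (if i = l then 1 - 2 * S l l else 0) := by
    intro i
    by_cases hil : i = l
    · subst hil
      rw [if_pos rfl, if_pos rfl, abs_sub_comm, abs_of_nonneg (by linarith)]
      ring
    · rw [if_neg hil, if_neg hil, sub_zero, add_zero, abs_of_nonneg (hmem.1 i l)]
  rw [Finset.sum_congr rfl fun i _ => key i, Finset.sum_add_distrib, hcol,
    Finset.sum_ite_eq' Finset.univ l (fun _ => 1 - 2 * S l l), if_pos (Finset.mem_univ l)]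
  have := S_diag hk hn l
  rw [← hSdef] at this
  have hn' : (0:ℝ) < n := by exact_mod_cast hn
  have : (k:ℝ)/(2*n) ≥ 1 - S l l := by linarith
  have e : 2 * ((k:ℝ)/(2*n)) = (k:ℝ)/n := by field_simp
  linarith

end RQ

lemma half (c ε : ℝ) {a b : ℕ} (X : Matrix (Fin a) (Fin a) ℝ) (Y : Matrix (Fin b) (Fin b) ℝ)
    (hX : ∀ i j, 0 ≤ X i j) (hY : ∀ i j, 0 ≤ Y i j)
    (hcX : gamma X ≤ c) (hcY : gamma Y ≤ c)
    (n k : ℕ) (hn : 0 < n) (hk : 0 < k) (hε : 0 ≤ ε)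
    (hdir : ∀ W ∈ matShape X n, ∃ W' ∈ matShape Y n, l1 (W - W') ≤ ε) :
    ∀ P ∈ matShape X k, ∃ P' ∈ matShape Y k, l1 (P - P') ≤ ε + 4 * c * k / n := by
  have hc0 : 0 ≤ c := le_trans (gamma_nonneg hX) hcX
  have hn' : (0:ℝ) < n := by exact_mod_cast hn
  have hk' : (0:ℝ) < k := by exact_mod_cast hk
  rintro P ⟨M, hM, rfl⟩
  by_cases hkn : k ≤ n
  · -- main case: k ≤ n
    set R := Rmat k n with hR
    set Q := Qmat k n with hQ
    have hRmem := Rmat_mem (n := n) hk hn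
    have hQmem := Qmat_mem (n := n) hk hn
    set N := Q * M with hNdef
    have hNmem : N ∈ Kset n (Fin a) := Kset_mul hn hk hQmem hM
    obtain ⟨W', hW', hclose⟩ := hdir (N * X * Nᵀ) ⟨N, hNmem, rfl⟩
    obtain ⟨N', hN'mem, rfl⟩ := hW'
    refine ⟨(R * N') * Y * (R * N')ᵀ, ⟨R * N', Kset_mul hk hn hRmem hN'mem, rfl⟩, ?_⟩
    have hP0 : ∀ i j, 0 ≤ (M * X * Mᵀ) i j := conj_nonneg hM hX
    set β : ℝ := (k:ℝ)/n with hβdef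
    have hβ0 : 0 ≤ β := by positivity
    have hβ1 : β ≤ 1 := by
      rw [hβdef, div_le_one hn']
      exact_mod_cast hkn
    have hpert : l1 (M * X * Mᵀ - (R * Q) * (M * X * Mᵀ) * (R * Q)ᵀ)
        ≤ 2 * β * gamma (M * X * Mᵀ) + β * β * gamma (M * X * Mᵀ) :=
      pert (M * X * Mᵀ) (R * Q) hP0 β hβ0 (S_col hk hn)
    have e1 : (R * Q) * (M * X * Mᵀ) * (R * Q)ᵀ = R * (N * X * Nᵀ) * Rᵀ := by
      rw [hNdef]
      simp only [Matrix.transpose_mul, Matrix.mul_assoc]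
    have e2 : (R * N') * Y * (R * N')ᵀ = R * (N' * Y * N'ᵀ) * Rᵀ := by
      simp only [Matrix.transpose_mul, Matrix.mul_assoc]
    have mid : l1 ((R * Q) * (M * X * Mᵀ) * (R * Q)ᵀ - (R * N') * Y * (R * N')ᵀ) ≤ ε := by
      rw [e1, e2]
      have e3 : R * (N * X * Nᵀ) * Rᵀ - R * (N' * Y * N'ᵀ) * Rᵀ
          = R * ((N * X * Nᵀ) - (N' * Y * N'ᵀ)) * Rᵀ := by
        rw [Matrix.mul_sub, Matrix.sub_mul]
      rw [e3]
      exact le_trans (l1_conj_le hRmem _) hclose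
    have tri := l1_triangle (M * X * Mᵀ) ((R * Q) * (M * X * Mᵀ) * (R * Q)ᵀ)
      ((R * N') * Y * (R * N')ᵀ)
    have hγ : gamma (M * X * Mᵀ) = gamma X := gamma_conj hM X
    rw [hγ] at hpert
    have hγ0 : 0 ≤ gamma X := gamma_nonneg hX
    have hnum : 2 * β * gamma X + β * β * gamma X ≤ 4 * c * k / n := by
      have t1 : 2 * β * gamma X ≤ 2 * β * c := by nlinarith
      have t2a : β * β ≤ β := by nlinarith
      have t2 : β * β * gamma X ≤ β * c :=
        le_trans (mul_le_mul_of_nonneg_right t2a hγ0)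
          (mul_le_mul_of_nonneg_left hcX hβ0)
      have e : 4 * c * (k:ℝ) / n = 4 * (β * c) := by
        rw [hβdef]; field_simp
      rw [e]
      nlinarith
    linarith
  · -- trivial case: n < k
    refine ⟨_, ⟨_, unif_mem hk (Fin b), rfl⟩, ?_⟩
    have h1 := l1_sub_le_gamma (conj_nonneg hM hX)
      (conj_nonneg (unif_mem hk (Fin b)) hY)
    rw [gamma_conj hM X, gamma_conj (unif_mem hk (Fin b)) Y] at h1
    have hkn' : (n:ℝ) ≤ (k:ℝ) := by
      exact_mod_cast (Nat.le_of_lt (Nat.lt_of_not_le hkn))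
    have hdiv : (1:ℝ) ≤ (k:ℝ)/n := (one_le_div hn').mpr hkn'
    have : gamma X + gamma Y ≤ 2 * c := by linarith
    have e : 4 * c * (k:ℝ) / n = 4 * c * ((k:ℝ)/n) := by ring
    nlinarith

/-- If `γ(X), γ(Y) ≤ c` and the ℓ¹-Hausdorff distance between `C(X,n)` and
`C(Y,n)` is at most `ε`, then that between `C(X,k)` and `C(Y,k)` is at most `ε + 4ck/n`. -/
theorem stmt_15 (c ε : ℝ) (a b : ℕ)
    (X : Matrix (Fin a) (Fin a) ℝ) (Y : Matrix (Fin b) (Fin b) ℝ)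
    (hX : ∀ i j, 0 ≤ X i j) (hY : ∀ i j, 0 ≤ Y i j)
    (hcX : gamma X ≤ c) (hcY : gamma Y ≤ c)
    (n k : ℕ) (hn : 0 < n) (hk : 0 < k)
    (h : hdistLE (matShape X n) (matShape Y n) ε) :
    hdistLE (matShape X k) (matShape Y k) (ε + 4 * c * k / n) := by
  have hε : 0 ≤ ε := by
    obtain ⟨W, hW⟩ := matShape_nonempty hn X
    obtain ⟨W', _, hle⟩ := h.1 W hW
    exact le_trans (l1_nonneg _) hle
  constructor
  · exact half c ε X Y hX hY hcX hcY n k hn hk hε h.1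
  · intro P' hP'
    obtain ⟨P, hP, hle⟩ := half c ε Y X hY hX hcY hcX n k hn hk hε
      (fun W hW => by
        obtain ⟨V, hV, hle'⟩ := h.2 W hW
        exact ⟨V, hV, by rwa [l1_sub_comm]⟩) P' hP'
    exact ⟨P, hP, by rwa [l1_sub_comm]⟩
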